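/- Let Σ₁ = Σ₂ = ℂP¹, let 0 = a₁ < a₂ < ⋯ < a_p be nonnegative reals, and let f : ℂP¹ → ℂP¹ be a holomorphic q-fold branched cover with q ≥ p such that f⁻¹(∞) = {a₁, …, a_p}, f⁻¹(0) = {∞}, and f maps the tangent half-line at 0 in the negative real direction to the tangent half-line at ∞ corresponding to the negative real direction. Then f ∘ ι = ι ∘ f where ι is complex conjugation; in particular f maps ℝP¹ to ℝP¹ and maps the negative-real asymptotic marker at ∞ to the negative-real tangent half-line at 0. -/

import Mathlib

open Complex Filter Topology


lemma conj_tendsto_punctured (z : ℂ) :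
    Tendsto (starRingEnd ℂ) (𝓝[≠] ((starRingEnd ℂ) z)) (𝓝[≠] z) := by
  refine tendsto_inf.2 ⟨?_, ?_⟩
  · exact tendsto_nhdsWithin_of_tendsto_nhds (by simpa using (Complex.continuous_conj.tendsto ((starRingEnd ℂ) z)))
  · refine tendsto_principal.2 (eventually_mem_nhdsWithin.mono ?_)
    intro w hw
    simp only [Set.mem_compl_iff, Set.mem_singleton_iff] at hw ⊢
    intro hc
    exact hw (by rw [← hc]; simp)

lemma conj_conj_hasDerivAt {u : ℂ → ℂ} {z d : ℂ} (h : HasDerivAt u d z) :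
    HasDerivAt (fun w => (starRingEnd ℂ) (u ((starRingEnd ℂ) w))) ((starRingEnd ℂ) d)
      ((starRingEnd ℂ) z) := by
  rw [hasDerivAt_iff_tendsto_slope] at h ⊢
  have key : ∀ w : ℂ, slope (fun w => (starRingEnd ℂ) (u ((starRingEnd ℂ) w))) ((starRingEnd ℂ) z) w
      = (starRingEnd ℂ) (slope u z ((starRingEnd ℂ) w)) := by
    intro w
    simp only [slope, smul_eq_mul, vsub_eq_sub, map_mul, map_sub, map_inv₀, Complex.conj_conj]
  have := (Complex.continuous_conj.tendsto d).comp (h.comp (conj_tendsto_punctured z))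
  refine this.congr' ?_
  filter_upwards with w
  simp [Function.comp, key w]

lemma conj_conj_differentiableAt {u : ℂ → ℂ} {z : ℂ} (h : DifferentiableAt ℂ u z) :
    DifferentiableAt ℂ (fun w => (starRingEnd ℂ) (u ((starRingEnd ℂ) w))) ((starRingEnd ℂ) z) :=
  (conj_conj_hasDerivAt h.hasDerivAt).differentiableAt

lemma local_ext {f : ℂ → ℂ} {A : ℂ} (hA : (starRingEnd ℂ) A = A)
    (hd : ∀ᶠ z in 𝓝[≠] A, DifferentiableAt ℂ f z)
    (hnz : ∀ᶠ z in 𝓝[≠] A, f z ≠ 0)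
    (hpole : Tendsto (fun z => ‖f z‖) (𝓝[≠] A) atTop) :
    ∃ φ : ℂ → ℂ, (∀ᶠ z in 𝓝 A, DifferentiableAt ℂ φ z) ∧
      (∀ᶠ z in 𝓝[≠] A, f z * ((starRingEnd ℂ) (f ((starRingEnd ℂ) z)))⁻¹ = φ z) := by
  set F : ℂ → ℂ := Function.update (fun z => (f z)⁻¹) A 0 with hFdef
  have hFeq : F =ᶠ[𝓝[≠] A] (fun z => (f z)⁻¹) := by
    refine eventually_mem_nhdsWithin.mono fun z hz => ?_
    exact Function.update_of_ne hz _ _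
  have hF0 : Tendsto F (𝓝[≠] A) (𝓝 0) := by
    have h1 : Tendsto (fun z => (f z)⁻¹) (𝓝[≠] A) (𝓝 0) := by
      rw [tendsto_zero_iff_norm_tendsto_zero]
      simpa [norm_inv, Pi.inv_def] using hpole.inv_tendsto_atTop
    exact h1.congr' hFeq.symm

  have hFdiff : ∀ᶠ z in 𝓝[≠] A, DifferentiableAt ℂ F z := by
    filter_upwards [hd, hnz, eventually_mem_nhdsWithin] with z h1 h2 hz
    refine (h1.inv h2).congr_of_eventuallyEq ?_
    filter_upwards [isOpen_compl_singleton.mem_nhds hz] with w hw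
    exact Function.update_of_ne hw _ _
  have hcont : ContinuousAt F A := by
    rw [← continuousWithinAt_compl_self]
    have : F A = 0 := Function.update_self _ _ _
    simpa [ContinuousWithinAt, this] using hF0
  have hFa : AnalyticAt ℂ F A :=
    Complex.analyticAt_of_differentiable_on_punctured_nhds_of_continuousAt hFdiff hcont
  have hnetop : analyticOrderAt F A ≠ ⊤ := by
    intro hev
    rw [analyticOrderAt_eq_top] at hev
    obtain ⟨z, h0, heq, hne⟩ :=
      ((hev.filter_mono nhdsWithin_le_nhds).and (hFeq.and hnz)).exists
    rw [heq, inv_eq_zero] at h0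
    exact hne h0
  obtain ⟨n, hn⟩ := WithTop.ne_top_iff_exists.1 hnetop
  obtain ⟨u, hu, hu0, huF⟩ := (hFa.analyticOrderAt_eq_natCast (n := n)).1 hn.symm
  set w : ℂ → ℂ := fun z => (starRingEnd ℂ) (u ((starRingEnd ℂ) z)) with hwdef
  have hconjA : Tendsto (starRingEnd ℂ) (𝓝 A) (𝓝 A) := by
    have := Complex.continuous_conj.tendsto A
    rwa [hA] at this
  have hudiff : ∀ᶠ z in 𝓝 A, DifferentiableAt ℂ u z :=
    hu.eventually_analyticAt.mono fun z hz => hz.differentiableAt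
  have hwdiff : ∀ᶠ z in 𝓝 A, DifferentiableAt ℂ w z := by
    filter_upwards [hconjA.eventually hudiff] with z hz
    simpa using conj_conj_differentiableAt hz
  have hune : ∀ᶠ z in 𝓝 A, u z ≠ 0 := hu.continuousAt.eventually_ne hu0
  refine ⟨fun z => w z * (u z)⁻¹, ?_, ?_⟩
  · filter_upwards [hwdiff, hune, hudiff] with z h1 h2 h3
    exact h1.mul (h3.inv h2)
  · have hconjP : Tendsto (starRingEnd ℂ) (𝓝[≠] A) (𝓝[≠] A) := by
      have := conj_tendsto_punctured A
      rwa [hA] at this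
    have huF' : ∀ᶠ z in 𝓝[≠] A, F z = (z - A) ^ n * u z := by
      filter_upwards [huF.filter_mono nhdsWithin_le_nhds] with z hz
      simpa [smul_eq_mul] using hz
    filter_upwards [huF', hconjP.eventually huF', hFeq, hconjP.eventually hFeq,
      hune.filter_mono nhdsWithin_le_nhds, eventually_mem_nhdsWithin] with z e1 e2 e3 e4 e6 e7
    have hzA : z ≠ A := e7
    have hfz : f z = ((z - A) ^ n * u z)⁻¹ := by
      rw [← e1, e3, inv_inv]
    have hcf : (starRingEnd ℂ) (f ((starRingEnd ℂ) z)) = ((z - A) ^ n * w z)⁻¹ := by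
      have : (f ((starRingEnd ℂ) z))⁻¹ = ((starRingEnd ℂ) z - A) ^ n * u ((starRingEnd ℂ) z) := by
        rw [← e4, e2]
      have h2 : f ((starRingEnd ℂ) z) = (((starRingEnd ℂ) z - A) ^ n * u ((starRingEnd ℂ) z))⁻¹ := by
        rw [← this, inv_inv]
      rw [h2, map_inv₀, map_mul, map_pow, map_sub, Complex.conj_conj, hA]
    rw [hfz, hcf, inv_inv]
    have hzA' : (z - A) ^ n ≠ 0 := pow_ne_zero _ (sub_ne_zero.2 hzA)
    field_simp


/- Involution Lemma, Version 2.  f : ℂP¹ → ℂP¹ is a holomorphic q-fold branched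
   cover (q ≥ p), modeled by a function f : ℂ → ℂ which is holomorphic off the pole
   set P = {a₁,…,a_p} ⊂ ℝ^{≥0} (0 = a₁ < a₂ < ⋯ < a_p), nonvanishing on ℂ∖P
   (f⁻¹(0) = {∞}, a zero of order q: zᵠf(z) → c ≠ 0 at ∞), with |f| → ∞ at each aᵢ
   (f⁻¹(∞) = {a₁,…,a_p}), and mapping the negative-real marker at 0 to the
   negative-real marker at ∞.  Then f commutes with conjugation, maps ℝP¹ to ℝP¹,
   and maps the negative-real marker at ∞ to the negative-real direction at 0. -/
theorem stmt11 (p q : ℕ) (hp : 0 < p) (hq : p ≤ q)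
    (a : Fin p → ℝ) (hmono : StrictMono a) (ha0 : a ⟨0, hp⟩ = 0)
    (P : Set ℂ) (hP : P = Set.range (fun i : Fin p => ((a i : ℝ) : ℂ)))
    (f : ℂ → ℂ)
    (hhol : DifferentiableOn ℂ f Pᶜ)
    (hnz : ∀ z ∈ Pᶜ, f z ≠ 0)
    (hpole : ∀ i : Fin p, Tendsto (fun z => ‖f z‖) (nhdsWithin ((a i : ℝ) : ℂ) Pᶜ) atTop)
    (hinf : ∃ c : ℂ, c ≠ 0 ∧ Tendsto (fun z : ℂ => z ^ q * f z) (cocompact ℂ) (nhds c))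
    (hmarker : Tendsto (fun x : ℝ => ((‖f (x : ℂ)‖ : ℝ) : ℂ) / f (x : ℂ))
      (nhdsWithin 0 (Set.Iio 0)) (nhds (-1))) :
    (∀ z ∈ Pᶜ, f ((starRingEnd ℂ) z) = (starRingEnd ℂ) (f z)) ∧
    (∀ x : ℝ, (x : ℂ) ∈ Pᶜ → (f (x : ℂ)).im = 0) ∧
    Tendsto (fun x : ℝ => f (x : ℂ) / ((‖f (x : ℂ)‖ : ℝ) : ℂ)) atBot (nhds (-1)) := by
  classical
  obtain ⟨c, hc0, hct⟩ := hinf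
  have hPfin : P.Finite := by rw [hP]; exact Set.finite_range _
  have hPclosed : IsClosed P := hPfin.isClosed
  have hPopen : IsOpen Pᶜ := hPclosed.isOpen_compl
  have hPreal : ∀ z ∈ P, (starRingEnd ℂ) z = z := by
    intro z hz
    rw [hP] at hz
    obtain ⟨i, rfl⟩ := hz
    exact Complex.conj_ofReal _
  have hPc : ∀ z ∈ Pᶜ, (starRingEnd ℂ) z ∈ Pᶜ := by
    intro z hz hmem
    have h2 := hPreal _ hmem
    rw [Complex.conj_conj] at h2
    exact hz (by rwa [← h2] at hmem)
  set g : ℂ → ℂ := fun z => (starRingEnd ℂ) (f ((starRingEnd ℂ) z)) with hgdef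
  set h : ℂ → ℂ := fun z => f z * (g z)⁻¹ with hhdef
  have hfa : ∀ z ∈ Pᶜ, DifferentiableAt ℂ f z := fun z hz =>
    (hhol z hz).differentiableAt (hPopen.mem_nhds hz)
  have hga : ∀ z ∈ Pᶜ, DifferentiableAt ℂ g z := by
    intro z hz
    have := conj_conj_differentiableAt (hfa _ (hPc z hz))
    simpa using this
  have hgnz : ∀ z ∈ Pᶜ, g z ≠ 0 := by
    intro z hz h0
    apply hnz _ (hPc z hz)
    have h0' : (starRingEnd ℂ) (f ((starRingEnd ℂ) z)) = 0 := h0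
    have h0'' := congrArg (starRingEnd ℂ) h0'
    simpa using h0''
  have hha : ∀ z ∈ Pᶜ, DifferentiableAt ℂ h z := fun z hz =>
    (hfa z hz).mul ((hga z hz).inv (hgnz z hz))
  have hfilter : ∀ A ∈ P, 𝓝[≠] A = 𝓝[Pᶜ] A := by
    intro A hA
    rw [nhdsWithin_eq_iff_eventuallyEq]
    have hU : IsOpen (P \ {A})ᶜ := (hPfin.subset Set.diff_subset).isClosed.isOpen_compl
    have hAU : A ∈ (P \ {A})ᶜ := by simp
    rw [Filter.eventuallyEq_set]
    filter_upwards [hU.mem_nhds hAU] with z hz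
    simp only [Set.mem_compl_iff, Set.mem_singleton_iff]
    constructor
    · intro hne hzP
      exact hz ⟨hzP, hne⟩
    · intro hnp heq
      exact hnp (heq ▸ hA)
  have hloc : ∀ A ∈ P, ∃ φ : ℂ → ℂ, (∀ᶠ z in 𝓝 A, DifferentiableAt ℂ φ z) ∧
      (∀ᶠ z in 𝓝[≠] A, h z = φ z) := by
    intro A hA
    have hA' := hA
    rw [hP] at hA'
    obtain ⟨i, hi⟩ := hA'
    have hAreal := hPreal A hA
    have hfeq := hfilter A hA
    have hpoleA : Tendsto (fun z => ‖f z‖) (𝓝[≠] A) atTop := by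
      rw [hfeq, ← hi]; exact hpole i
    have hev : ∀ᶠ z in 𝓝[≠] A, z ∈ Pᶜ := by
      rw [hfeq]; exact eventually_mem_nhdsWithin
    exact local_ext hAreal (hev.mono fun z hz => hfa z hz) (hev.mono fun z hz => hnz z hz) hpoleA
  choose! φ hφd hφe using hloc
  set H : ℂ → ℂ := fun z => if z ∈ P then limUnder (𝓝[≠] z) h else h z with hHdef
  have hHeqh : ∀ z ∈ Pᶜ, H z = h z := fun z hz => if_neg hz
  have hHdiff : Differentiable ℂ H := by
    intro z
    by_cases hz : z ∈ P
    · have hφz : DifferentiableAt ℂ (φ z) z := (hφd z hz).self_of_nhds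
      have hEE : h =ᶠ[𝓝[≠] z] φ z := hφe z hz
      have hlim : Tendsto h (𝓝[≠] z) (𝓝 (φ z z)) :=
        ((hφz.continuousAt.tendsto).mono_left nhdsWithin_le_nhds).congr' hEE.symm
      have hlimU : limUnder (𝓝[≠] z) h = φ z z := hlim.limUnder_eq
      have hPev : ∀ᶠ w in 𝓝 z, w ∈ P → w = z := by
        have hU : IsOpen (P \ {z})ᶜ := (hPfin.subset Set.diff_subset).isClosed.isOpen_compl
        filter_upwards [hU.mem_nhds (by simp)] with w hw hwP
        by_contra hne
        exact hw ⟨hwP, hne⟩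
      have heq : H =ᶠ[𝓝 z] φ z := by
        have h2 := eventually_nhdsWithin_iff.1 (hφe z hz)
        filter_upwards [hPev, h2] with w h1 h2'
        by_cases hwz : w = z
        · subst hwz
          simp only [hHdef, if_pos hz, hlimU]
        · have hwP : w ∉ P := fun hc => hwz (h1 hc)
          simp only [hHdef, if_neg hwP]
          exact h2' hwz
      exact hφz.congr_of_eventuallyEq heq
    · have heq : H =ᶠ[𝓝 z] h := by
        filter_upwards [hPopen.mem_nhds hz] with w hw
        exact if_neg hw
      exact (hha z hz).congr_of_eventuallyEq heq
  have hconjco : Tendsto (starRingEnd ℂ) (cocompact ℂ) (cocompact ℂ) := by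
    rw [hasBasis_cocompact.tendsto_right_iff]
    intro K hK
    have hK' : IsCompact ((starRingEnd ℂ) '' K) := hK.image Complex.continuous_conj
    have hmem : ((starRingEnd ℂ) '' K)ᶜ ∈ cocompact ℂ :=
      mem_cocompact.2 ⟨_, hK', le_refl _⟩
    filter_upwards [hmem] with z hzc hzK
    exact hzc ⟨(starRingEnd ℂ) z, hzK, Complex.conj_conj z⟩
  have ht2 : Tendsto (fun z => z ^ q * g z) (cocompact ℂ) (𝓝 ((starRingEnd ℂ) c)) := by
    have hcomp := (Complex.continuous_conj.tendsto c).comp (hct.comp hconjco)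
    refine hcomp.congr fun z => ?_
    simp [Function.comp, hgdef, map_mul, map_pow, Complex.conj_conj]
  have hco_ev : ∀ᶠ z in cocompact ℂ, z ∉ P ∧ z ≠ 0 := by
    have hPc0 : IsCompact (P ∪ {0} : Set ℂ) := (hPfin.union (Set.finite_singleton 0)).isCompact
    have hmem : (P ∪ {0} : Set ℂ)ᶜ ∈ cocompact ℂ := mem_cocompact.2 ⟨_, hPc0, le_refl _⟩
    filter_upwards [hmem] with z hzc
    refine ⟨fun hc => hzc (Or.inl hc), fun hc => hzc (Or.inr (by simp [hc]))⟩
  have hHco : Tendsto H (cocompact ℂ) (𝓝 (c * ((starRingEnd ℂ) c)⁻¹)) := by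
    have hcne : (starRingEnd ℂ) c ≠ 0 := by simpa using hc0
    have hmul := hct.mul (ht2.inv₀ hcne)
    refine hmul.congr' ?_
    filter_upwards [hco_ev] with z hz
    obtain ⟨hzP, hz0⟩ := hz
    have hqz : z ^ q ≠ 0 := pow_ne_zero _ hz0
    have hgz : g z ≠ 0 := hgnz z hzP
    have hH : H z = f z * (g z)⁻¹ := if_neg hzP
    rw [hH, mul_inv]
    field_simp
  have hbdd : Bornology.IsBounded (Set.range H) := by
    have hev := hHco.eventually (Metric.closedBall_mem_nhds _ one_pos)
    obtain ⟨K, hK, hsub⟩ := mem_cocompact.1 hev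
    have hcontH : Continuous H := hHdiff.continuous
    have hsubset : Set.range H ⊆ H '' K ∪ Metric.closedBall (c * ((starRingEnd ℂ) c)⁻¹) 1 := by
      rintro - ⟨z, rfl⟩
      by_cases hzK : z ∈ K
      · exact Or.inl ⟨z, hzK, rfl⟩
      · exact Or.inr (hsub hzK)
    exact (((hK.image hcontH).isBounded).union Metric.isBounded_closedBall).subset hsubset
  obtain ⟨C, hC⟩ := hHdiff.exists_const_forall_eq_of_bounded hbdd
  have hneg : ∀ x : ℝ, x < 0 → (x : ℂ) ∈ Pᶜ := by
    intro x hx hmem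
    rw [hP] at hmem
    obtain ⟨i, hi⟩ := hmem
    have hi' : ((a i : ℝ) : ℂ) = (x : ℂ) := hi
    have hax : a i = x := by exact_mod_cast hi'
    have h0le : (0:ℝ) ≤ a i := by
      have hmle := hmono.monotone (show (⟨0, hp⟩ : Fin p) ≤ i from by simp [Fin.le_def])
      rwa [ha0] at hmle
    linarith
  have hm2 : Tendsto (fun x : ℝ => ((‖f (x:ℂ)‖ : ℝ) : ℂ) / (starRingEnd ℂ) (f (x:ℂ)))
      (𝓝[<] (0:ℝ)) (𝓝 (-1)) := by
    have hcomp := (Complex.continuous_conj.tendsto (-1)).comp hmarker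
    have hneg1 : (starRingEnd ℂ) (-1) = -1 := by simp
    rw [hneg1] at hcomp
    refine hcomp.congr fun x => ?_
    simp [Function.comp, map_div₀, Complex.conj_ofReal]
  have hm3 : Tendsto (fun x : ℝ => f (x:ℂ) / ((‖f (x:ℂ)‖ : ℝ) : ℂ)) (𝓝[<] (0:ℝ)) (𝓝 (-1)) := by
    have hinv := hmarker.inv₀ (by norm_num : (-1:ℂ) ≠ 0)
    simp only [inv_div] at hinv
    convert hinv using 2
    norm_num
  have hHneg : Tendsto (fun x : ℝ => H (x:ℂ)) (𝓝[<] (0:ℝ)) (𝓝 1) := by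
    have hmul := hm3.mul hm2
    have hone : (-1:ℂ) * (-1) = 1 := by norm_num
    rw [hone] at hmul
    refine hmul.congr' ?_
    filter_upwards [eventually_mem_nhdsWithin] with x hx
    have hx0 : x < 0 := hx
    have hxP : (x:ℂ) ∈ Pᶜ := hneg x hx0
    have hfx : f (x:ℂ) ≠ 0 := hnz _ hxP
    have hn0 : ((‖f (x:ℂ)‖ : ℝ) : ℂ) ≠ 0 := by
      simpa [Complex.ofReal_eq_zero, norm_eq_zero] using hfx
    have hcf : (starRingEnd ℂ) (f (x:ℂ)) ≠ 0 := by simpa using hfx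
    have hH : H (x:ℂ) = f (x:ℂ) * ((starRingEnd ℂ) (f (x:ℂ)))⁻¹ := by
      have h1 : H (x:ℂ) = h (x:ℂ) := if_neg hxP
      rw [h1, hhdef]
      simp [hgdef, Complex.conj_ofReal]
    rw [hH, div_mul_div_comm, mul_comm (f (x:ℂ)) (((‖f (x:ℂ)‖ : ℝ) : ℂ)),
      mul_div_mul_left _ _ hn0, div_eq_mul_inv]
  have hC1 : C = 1 := by
    have hconst : Tendsto (fun x : ℝ => H (x:ℂ)) (𝓝[<] (0:ℝ)) (𝓝 C) := by
      have : (fun x : ℝ => H (x:ℂ)) = fun _ => C := funext fun x => hC _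
      rw [this]
      exact tendsto_const_nhds
    exact tendsto_nhds_unique hconst hHneg
  have hfg : ∀ z ∈ Pᶜ, f z = g z := by
    intro z hz
    have h1 : H z = 1 := by rw [hC z, hC1]
    rw [hHeqh z hz] at h1
    exact (mul_inv_eq_one₀ (hgnz z hz)).1 h1
  have hconj : ∀ z ∈ Pᶜ, f ((starRingEnd ℂ) z) = (starRingEnd ℂ) (f z) := by
    intro z hz
    have hz' : (starRingEnd ℂ) z ∈ Pᶜ := hPc z hz
    have h1 : f ((starRingEnd ℂ) z)
        = (starRingEnd ℂ) (f ((starRingEnd ℂ) ((starRingEnd ℂ) z))) := hfg _ hz'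
    rwa [Complex.conj_conj] at h1
  have hreal : ∀ x : ℝ, (x : ℂ) ∈ Pᶜ → (f (x : ℂ)).im = 0 := by
    intro x hx
    have h1 := hconj _ hx
    rw [Complex.conj_ofReal] at h1
    have : (starRingEnd ℂ) (f (x:ℂ)) = f (x:ℂ) := h1.symm
    exact Complex.conj_eq_iff_im.1 this
  refine ⟨hconj, hreal, ?_⟩
  have hrcont : ContinuousOn (fun x : ℝ => (f (x:ℂ)).re) (Set.Iio (0:ℝ)) := by
    have h1 : ContinuousOn (fun x : ℝ => f (x:ℂ)) (Set.Iio 0) := by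
      apply (hhol.continuousOn).comp Complex.continuous_ofReal.continuousOn
      intro x hx
      exact hneg x hx
    exact Complex.continuous_re.comp_continuousOn h1
  have hrne : ∀ x ∈ Set.Iio (0:ℝ), (f (x:ℂ)).re ≠ 0 := by
    intro x hx h0
    apply hnz _ (hneg x hx)
    exact Complex.ext h0 (hreal x (hneg x hx))
  have hfeqre : ∀ x : ℝ, x < 0 → f (x:ℂ) = (((f (x:ℂ)).re : ℝ) : ℂ) := by
    intro x hx
    apply Complex.ext <;> simp [hreal x (hneg x hx)]
  have hev_neg : ∀ᶠ x : ℝ in 𝓝[<] (0:ℝ), (f (x:ℂ)).re < 0 := by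
    have hev := Metric.tendsto_nhds.1 hmarker 1 one_pos
    filter_upwards [hev, eventually_mem_nhdsWithin] with x h1 hx
    rcases lt_or_gt_of_ne (hrne x hx) with hlt | hgt
    · exact hlt
    · exfalso
      have hfx := hfeqre x hx
      have hnorm : ‖f (x:ℂ)‖ = (f (x:ℂ)).re := by
        rw [hfx]
        simp [abs_of_pos hgt]
      rw [hnorm, hfx] at h1
      simp only [Complex.ofReal_re] at h1
      rw [div_self (by exact_mod_cast hgt.ne' : (((f (x:ℂ)).re : ℝ) : ℂ) ≠ 0)] at h1
      rw [Complex.dist_eq] at h1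
      norm_num at h1
  obtain ⟨x₀, hx₀r, hx₀mem⟩ := (hev_neg.and eventually_mem_nhdsWithin).exists
  have hall : ∀ x : ℝ, x < 0 → (f (x:ℂ)).re < 0 := by
    intro x hx
    rcases lt_or_gt_of_ne (hrne x hx) with hlt | hgt
    · exact hlt
    exfalso
    have hx₀0 : x₀ < 0 := hx₀mem
    rcases le_total x x₀ with hle | hle
    · have hsub : Set.Icc x x₀ ⊆ Set.Iio (0:ℝ) := fun y hy => lt_of_le_of_lt hy.2 hx₀0
      have hiv := intermediate_value_Icc' hle (hrcont.mono hsub)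
      have h0 : (0:ℝ) ∈ Set.Icc ((f (x₀:ℂ)).re) ((f (x:ℂ)).re) := ⟨hx₀r.le, hgt.le⟩
      obtain ⟨y, hy, hy0⟩ := hiv h0
      exact hrne y (hsub hy) hy0
    · have hsub : Set.Icc x₀ x ⊆ Set.Iio (0:ℝ) := fun y hy => lt_of_le_of_lt hy.2 hx
      have hiv := intermediate_value_Icc hle (hrcont.mono hsub)
      have h0 : (0:ℝ) ∈ Set.Icc ((f (x₀:ℂ)).re) ((f (x:ℂ)).re) := ⟨hx₀r.le, hgt.le⟩
      obtain ⟨y, hy, hy0⟩ := hiv h0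
      exact hrne y (hsub hy) hy0
  refine tendsto_const_nhds.congr' ?_
  filter_upwards [eventually_lt_atBot (0:ℝ)] with x hx
  have hr := hall x hx
  have hfx := hfeqre x hx
  rw [hfx]
  rw [show ‖((((f (x:ℂ)).re : ℝ)) : ℂ)‖ = -(f (x:ℂ)).re by
    simp [Real.norm_eq_abs, abs_of_neg hr]]
  rw [show ((-(f (x:ℂ)).re : ℝ) : ℂ) = -(((f (x:ℂ)).re : ℝ) : ℂ) by push_cast; ring]
  rw [div_neg, div_self (by exact_mod_cast hr.ne : (((f (x:ℂ)).re : ℝ) : ℂ) ≠ 0)]
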